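/- For every ε ∈ (−1, 1), the sequence a_j = j (1−ε)_{j−1} / (1+ε)_j (j ≥ 1) satisfies lim_{j→∞} j^{2ε} a_j = Γ(1+ε)/Γ(1−ε). Consequently, the stationary distribution of the Gillis random walk decays as π_j ∼ π_0 · (Γ(1+ε)/Γ(1−ε)) · j^{−2ε}, and it is normalizable precisely when 2ε > 1. -/

import Mathlib

open Filter Nat Topology

/-- Pochhammer symbol `(x)ₙ = x (x+1) ⋯ (x+n-1)`. -/
noncomputable def poch (x : ℝ) (n : ℕ) : ℝ := ∏ i ∈ Finset.range n, (x + i)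

/-- The radial profile of the candidate stationary distribution of the Gillis walk:
`a j = j (1−ε)_{j−1} / (1+ε)_j`. -/
noncomputable def gA (ε : ℝ) (j : ℕ) : ℝ :=
  (j : ℝ) * poch (1 - ε) (j - 1) / poch (1 + ε) j

lemma poch_pos {x : ℝ} (hx : 0 < x) (n : ℕ) : 0 < poch x n := by
  apply Finset.prod_pos
  intro i _
  positivity

lemma gammaSeq_eq (x : ℝ) (n : ℕ) :
    Real.GammaSeq x n = (n : ℝ) ^ x * n ! / poch x (n + 1) := rfl

lemma key (ε : ℝ) (hε1 : -1 < ε) (hε2 : ε < 1) (n : ℕ) (hn : 1 ≤ n) :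
    ((n + 1 : ℕ) : ℝ) ^ (2 * ε) * gA ε (n + 1) =
      (((n : ℝ) + 1) / (((n : ℝ) + 1) - ε)) * ((((n : ℝ) + 1) / (n : ℝ)) ^ (2 * ε)) *
        (Real.GammaSeq (1 + ε) n / Real.GammaSeq (1 - ε) n) := by
  have hN : (0 : ℝ) < n := by exact_mod_cast hn
  have hN1 : (0 : ℝ) < (n : ℝ) + 1 := by linarith
  have hP1 : 0 < poch (1 + ε) (n + 1) := poch_pos (by linarith) _
  have hP2 : 0 < poch (1 - ε) n := poch_pos (by linarith) _
  have hfac : (0 : ℝ) < (n ! : ℝ) := by exact_mod_cast Nat.factorial_pos n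
  have hne : ((n : ℝ) + 1) - ε ≠ 0 := by nlinarith
  have hrpow : (0 : ℝ) < (n : ℝ) ^ (2 * ε) := Real.rpow_pos_of_pos hN _
  have hrpow2 : (0 : ℝ) < (n : ℝ) ^ (1 - ε) := Real.rpow_pos_of_pos hN _
  have hsucc : poch (1 - ε) (n + 1) = poch (1 - ε) n * ((1 - ε) + n) :=
    Finset.prod_range_succ _ _
  have hsplit : (n : ℝ) ^ (1 + ε) = (n : ℝ) ^ (1 - ε) * (n : ℝ) ^ (2 * ε) := by
    rw [← Real.rpow_add hN]; ring_nf
  have hdiv : (((n : ℝ) + 1) / (n : ℝ)) ^ (2 * ε)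
      = ((n : ℝ) + 1) ^ (2 * ε) / (n : ℝ) ^ (2 * ε) :=
    Real.div_rpow (by linarith) (le_of_lt hN) _
  rw [gA, gammaSeq_eq, gammaSeq_eq, hsucc, hsplit, hdiv]
  simp only [Nat.add_sub_cancel]
  push_cast
  have hx : (1 : ℝ) - ε + n ≠ 0 := by nlinarith
  field_simp
  ring

/-- For `ε ∈ (−1,1)`, `j^{2ε} a_j → Γ(1+ε)/Γ(1−ε)`, so the stationary distribution of the
Gillis walk decays as `π_j ∼ π_0 (Γ(1+ε)/Γ(1−ε)) j^{−2ε}`, and it is normalizable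
precisely when `2ε > 1`. -/
theorem gillis_stationary_tail (ε : ℝ) (hε : ε ∈ Set.Ioo (-1 : ℝ) 1) :
    Tendsto (fun j : ℕ => (j : ℝ) ^ (2 * ε) * gA ε j) atTop
      (nhds (Real.Gamma (1 + ε) / Real.Gamma (1 - ε))) ∧
    (Summable (gA ε) ↔ 1 < 2 * ε) := by
  obtain ⟨hε1, hε2⟩ := hε
  set c : ℝ := Real.Gamma (1 + ε) / Real.Gamma (1 - ε) with hc_def
  have hΓ1 : 0 < Real.Gamma (1 + ε) := Real.Gamma_pos_of_pos (by linarith)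
  have hΓ2 : 0 < Real.Gamma (1 - ε) := Real.Gamma_pos_of_pos (by linarith)
  have hc : 0 < c := div_pos hΓ1 hΓ2
  -- auxiliary limit : j/(j-a) → 1
  have hA : ∀ a : ℝ, Tendsto (fun j : ℕ => (j : ℝ) / ((j : ℝ) - a)) atTop (𝓝 1) := by
    intro a
    have h0 : Tendsto (fun j : ℕ => (1 : ℝ) / (1 - a / (j : ℝ))) atTop (𝓝 1) := by
      have ha : Tendsto (fun j : ℕ => a / (j : ℝ)) atTop (𝓝 0) :=
        Tendsto.div_atTop tendsto_const_nhds tendsto_natCast_atTop_atTop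
      have h1 : Tendsto (fun j : ℕ => (1 : ℝ) - a / (j : ℝ)) atTop (𝓝 1) := by
        simpa using tendsto_const_nhds.sub ha
      have := h1.inv₀ one_ne_zero
      simpa [one_div] using this
    refine Tendsto.congr' ?_ h0
    filter_upwards [eventually_gt_atTop 0] with j hj
    have hjR : (0 : ℝ) < (j : ℝ) := by exact_mod_cast hj
    have h2 : (1 : ℝ) - a / (j : ℝ) = ((j : ℝ) - a) / (j : ℝ) := by field_simp
    rw [h2, one_div_div]
  -- the main limit
  have hmain : Tendsto (fun j : ℕ => (j : ℝ) ^ (2 * ε) * gA ε j) atTop (𝓝 c) := by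
    have hB : Tendsto (fun j : ℕ => ((j : ℝ) / ((j : ℝ) - 1)) ^ (2 * ε)) atTop (𝓝 1) := by
      have := (hA 1).rpow_const (p := 2 * ε) (Or.inl one_ne_zero)
      simpa using this
    have hC : Tendsto (fun j : ℕ =>
        Real.GammaSeq (1 + ε) (j - 1) / Real.GammaSeq (1 - ε) (j - 1)) atTop
        (𝓝 c) := by
      have h1 := (Real.GammaSeq_tendsto_Gamma (1 + ε)).comp (tendsto_sub_atTop_nat 1)
      have h2 := (Real.GammaSeq_tendsto_Gamma (1 - ε)).comp (tendsto_sub_atTop_nat 1)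
      exact h1.div h2 hΓ2.ne'
    have hF : Tendsto (fun j : ℕ =>
        ((j : ℝ) / ((j : ℝ) - ε)) * (((j : ℝ) / ((j : ℝ) - 1)) ^ (2 * ε)) *
          (Real.GammaSeq (1 + ε) (j - 1) / Real.GammaSeq (1 - ε) (j - 1))) atTop (𝓝 c) := by
      have := ((hA ε).mul hB).mul hC
      simpa using this
    refine Tendsto.congr' ?_ hF
    filter_upwards [eventually_ge_atTop 2] with j hj
    match j, hj with
    | (n + 1), hj =>
      have hn : 1 ≤ n := by omega
      have h := (key ε hε1 hε2 n hn).symm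
      have hcast : ((n + 1 : ℕ) : ℝ) = (n : ℝ) + 1 := by push_cast; ring
      simpa [Nat.add_sub_cancel, hcast] using h
  refine ⟨hmain, ?_⟩
  -- asymptotic equivalence with c * j ^ (-(2ε))
  have hequiv : Asymptotics.IsEquivalent atTop (gA ε)
      (fun j : ℕ => c * (j : ℝ) ^ (-(2 * ε))) := by
    refine (fun (_ : ∀ᶠ j in atTop, (fun j : ℕ => c * (j : ℝ) ^ (-(2 * ε))) j = 0 → gA ε j = 0) h =>
      Asymptotics.isEquivalent_of_tendsto_one h) ?_ ?_
    · filter_upwards [eventually_gt_atTop 0] with j hj h0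
      exfalso
      have hjR : (0 : ℝ) < (j : ℝ) := by exact_mod_cast hj
      have : c * (j : ℝ) ^ (-(2 * ε)) ≠ 0 :=
        mul_ne_zero hc.ne' (Real.rpow_pos_of_pos hjR _).ne'
      exact this h0
    · have h0 : Tendsto (fun j : ℕ => ((j : ℝ) ^ (2 * ε) * gA ε j) / c) atTop (𝓝 1) := by
        simpa [div_self hc.ne'] using hmain.div_const c
      refine Tendsto.congr' ?_ h0
      filter_upwards [eventually_gt_atTop 0] with j hj
      have hjR : (0 : ℝ) < (j : ℝ) := by exact_mod_cast hj
      have hr : (0 : ℝ) < (j : ℝ) ^ (2 * ε) := Real.rpow_pos_of_pos hjR _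
      simp only [Pi.div_apply]
      rw [Real.rpow_neg hjR.le]
      field_simp
  rw [IsEquivalent.summable_iff_nat hequiv, summable_mul_left_iff hc.ne',
    Real.summable_nat_rpow]
  constructor <;> intro h <;> linarith
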